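/- Let (A, U) be a nondegenerate H-pair of degree d = 3 satisfying the OP-condition. Then there is a ℂ-algebra isomorphism from A to ℂ[x]/(x⁴) carrying U onto the ℂ-linear span of the images of x and x². -/

import Mathlib

/-- The socle of a commutative local ring: `Soc(A) = {a ∈ A : a·𝔪 = 0}`. -/
def socle (A : Type*) [CommRing A] [IsLocalRing A] : Ideal A where
  carrier := {a : A | ∀ m ∈ IsLocalRing.maximalIdeal A, a * m = 0}
  add_mem' := by
    intro a b ha hb m hm
    rw [add_mul, ha m hm, hb m hm, add_zero]
  zero_mem' := by
    intro m hm
    rw [zero_mul]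
  smul_mem' := by
    intro c a ha m hm
    show c * a * m = 0
    rw [mul_assoc, ha m hm, mul_zero]

open Polynomial

section Aux

variable {A : Type*} [CommRing A] [Algebra ℂ A]

lemma smul_mem_ideal (I : Ideal A) (μ : ℂ) {x : A} (hx : x ∈ I) : μ • x ∈ I := by
  rw [Algebra.smul_def]; exact I.mul_mem_left _ hx

lemma scalar_cancel {a : ℂ} {x : A} (h : algebraMap ℂ A a * x = 0) (hx : x ≠ 0) : a = 0 := by
  by_contra ha
  apply hx
  calc x = algebraMap ℂ A a⁻¹ * (algebraMap ℂ A a * x) := by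
            rw [← mul_assoc, ← map_mul, inv_mul_cancel₀ ha, map_one, one_mul]
    _ = 0 := by rw [h, mul_zero]

lemma coeffs4 {s : A} (h3 : s ^ 3 ≠ 0) (h4 : s ^ 4 = 0) {a0 a1 a2 a3 : ℂ}
    (h : algebraMap ℂ A a0 + algebraMap ℂ A a1 * s + algebraMap ℂ A a2 * s ^ 2
      + algebraMap ℂ A a3 * s ^ 3 = 0) : a0 = 0 ∧ a1 = 0 ∧ a2 = 0 ∧ a3 = 0 := by
  have h5 : s ^ 5 = 0 := by linear_combination s * h4
  have h6 : s ^ 6 = 0 := by linear_combination s ^ 2 * h4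
  have e0 : algebraMap ℂ A a0 * s ^ 3 = 0 := by
    linear_combination s ^ 3 * h - algebraMap ℂ A a1 * h4 - algebraMap ℂ A a2 * h5
      - algebraMap ℂ A a3 * h6
  have ha0 : a0 = 0 := scalar_cancel e0 h3
  rw [ha0, map_zero, zero_add] at h
  have e1 : algebraMap ℂ A a1 * s ^ 3 = 0 := by
    linear_combination s ^ 2 * h - algebraMap ℂ A a2 * h4 - algebraMap ℂ A a3 * h5
  have ha1 : a1 = 0 := scalar_cancel e1 h3
  rw [ha1, map_zero, zero_mul, zero_add] at h
  have e2 : algebraMap ℂ A a2 * s ^ 3 = 0 := by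
    linear_combination s * h - algebraMap ℂ A a3 * h4
  have ha2 : a2 = 0 := scalar_cancel e2 h3
  rw [ha2, map_zero, zero_mul, zero_add] at h
  have ha3 : a3 = 0 := scalar_cancel h h3
  exact ⟨ha0, ha1, ha2, ha3⟩

lemma cubic_root (a b c : ℂ) : ∃ l : ℂ, a - 3 * l * b + 3 * l ^ 2 * c - l ^ 3 = 0 := by
  obtain ⟨l, hl⟩ := Complex.exists_root (f := C 1 * X ^ 3 + C (-(3 * c)) * X ^ 2 + C (3 * b) * X
      + C (-a)) (by rw [degree_cubic one_ne_zero]; norm_num)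
  refine ⟨l, ?_⟩
  have := hl
  simp [IsRoot, eval_add, eval_mul, eval_pow] at this
  linear_combination -this

lemma range_pair {M : Type*} (x y : M) : Set.range ![x, y] = {x, y} := by
  ext z; simp [Fin.exists_fin_two]; tauto

lemma range_triple {M : Type*} (x y z : M) : Set.range ![x, y, z] = {x, y, z} := by
  ext w
  constructor
  · rintro ⟨i, rfl⟩; fin_cases i <;> simp
  · rintro (rfl | rfl | rfl)
    exacts [⟨0, rfl⟩, ⟨1, rfl⟩, ⟨2, rfl⟩]

end Aux

open IsLocalRing

set_option maxHeartbeats 1600000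

/-- Let `(A, U)` be a nondegenerate H-pair of degree `d = 3` satisfying the OP-condition.
Then there is a `ℂ`-algebra isomorphism from `A` to `ℂ[x]/(x⁴)` carrying `U` onto the
`ℂ`-linear span of the images of `x` and `x²`. -/
theorem hpair_deg_three_of_op_condition
    (A : Type*) [CommRing A] [Algebra ℂ A] [FiniteDimensional ℂ A] [IsLocalRing A]
    -- `(A, U)` is an H-pair:
    (U : Submodule ℂ A)
    (hUm : U ≤ (IsLocalRing.maximalIdeal A).restrictScalars ℂ)
    (hgen : Algebra.adjoin ℂ (U : Set A) = ⊤)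
    -- of degree `3`:
    (hdeg₁ : ¬ ((IsLocalRing.maximalIdeal A ^ 3 : Ideal A) : Set A) ⊆ (U : Set A))
    (hdeg₂ : ∀ e : ℕ, 3 < e →
      ((IsLocalRing.maximalIdeal A ^ e : Ideal A) : Set A) ⊆ (U : Set A))
    -- nondegenerate: `dim_ℂ Soc(A) = 1` and `𝔪 = U ⊕ Soc(A)`:
    (hsoc : Module.finrank ℂ (socle A) = 1)
    (hsup : U ⊔ (socle A).restrictScalars ℂ = (IsLocalRing.maximalIdeal A).restrictScalars ℂ)
    (hinf : U ⊓ (socle A).restrictScalars ℂ = ⊥)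
    -- the OP-condition (algebraic form):
    (hOP : ∀ m ∈ IsLocalRing.maximalIdeal A, m ^ 3 = 0 →
      ∃ c : Aˣ, ∃ u ∈ U, ∃ k : ℕ, 1 ≤ k ∧ u ^ (k + 1) = 0 ∧ m = (c : A) * u ^ k) :
    ∃ e : A ≃ₐ[ℂ] (ℂ[X] ⧸ Ideal.span {(X : ℂ[X]) ^ 4}),
      Submodule.map e.toLinearMap U =
        Submodule.span ℂ {Ideal.Quotient.mk (Ideal.span {(X : ℂ[X]) ^ 4}) X,
          Ideal.Quotient.mk (Ideal.span {(X : ℂ[X]) ^ 4}) (X ^ 2)} := by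
  classical
  -- ## Step 0: basic consequences
  have hsq_ideal : (maximalIdeal A) ^ 2 = maximalIdeal A * maximalIdeal A := by rw [pow_two]
  -- the maximal ideal is nilpotent
  have hnilp : ∃ n : ℕ, maximalIdeal A ^ n = ⊥ := by
    have : IsArtinian A A := isArtinian_of_tower ℂ inferInstance
    have h := IsArtinianRing.isNilpotent_jacobson_bot (R := A)
    rw [IsLocalRing.jacobson_eq_maximalIdeal ⊥ bot_ne_top] at h
    exact h
  -- `𝔪 ^ 4 = 0`
  have hM4 : (maximalIdeal A) ^ 4 = ⊥ := by
    have key : ∀ i : ℕ, maximalIdeal A ^ (4 + i) = ⊥ → maximalIdeal A ^ 4 = ⊥ := by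
      intro i
      induction i with
      | zero => exact fun h => h
      | succ i ih =>
        intro h
        apply ih
        rw [eq_bot_iff]
        intro x hx
        have hxU : x ∈ U := hdeg₂ (4 + i) (by omega) hx
        have hxS : x ∈ socle A := by
          intro m hm
          have : x * m ∈ maximalIdeal A ^ (4 + i) * maximalIdeal A := Ideal.mul_mem_mul hx hm
          rw [← pow_succ] at this
          rw [show 4 + i + 1 = 4 + (i + 1) by omega] at this
          rw [h] at this
          exact this
        have : x ∈ U ⊓ (socle A).restrictScalars ℂ := ⟨hxU, hxS⟩
        rw [hinf] at this
        exact this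
    obtain ⟨n, hn⟩ := hnilp
    apply key n
    have : maximalIdeal A ^ (4 + n) ≤ maximalIdeal A ^ n := Ideal.pow_le_pow_right (by omega)
    rw [hn] at this
    exact eq_bot_iff.mpr this
  have h4z : ∀ {x : A}, x ∈ (maximalIdeal A) ^ 4 → x = 0 := by
    intro x hx; rw [hM4] at hx; exact hx
  have hprod4 : ∀ a ∈ maximalIdeal A, ∀ b ∈ maximalIdeal A, ∀ c ∈ maximalIdeal A,
      ∀ d ∈ maximalIdeal A, a * b * c * d = 0 := by
    intro a ha b hb c hc d hd
    apply h4z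
    have h2 : a * b ∈ maximalIdeal A ^ 2 := by rw [hsq_ideal]; exact Ideal.mul_mem_mul ha hb
    have h3 : a * b * c ∈ maximalIdeal A ^ 3 := by
      rw [show (3:ℕ) = 2 + 1 by norm_num, pow_succ]
      exact Ideal.mul_mem_mul h2 hc
    rw [show (4:ℕ) = 3 + 1 by norm_num, pow_succ]
    exact Ideal.mul_mem_mul h3 hd
  have hmem2 : ∀ a ∈ maximalIdeal A, ∀ b ∈ maximalIdeal A, a * b ∈ maximalIdeal A ^ 2 := by
    intro a ha b hb; rw [hsq_ideal]; exact Ideal.mul_mem_mul ha hb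
  have hmem3 : ∀ a ∈ maximalIdeal A, ∀ b ∈ maximalIdeal A, ∀ c ∈ maximalIdeal A,
      a * b * c ∈ maximalIdeal A ^ 3 := by
    intro a ha b hb c hc
    rw [show (3:ℕ) = 2 + 1 by norm_num, pow_succ]
    exact Ideal.mul_mem_mul (hmem2 a ha b hb) hc
  -- `𝔪 ^ 3 ≠ 0`
  have hM3ne : (maximalIdeal A) ^ 3 ≠ ⊥ := by
    intro h
    apply hdeg₁
    intro x hx
    rw [h] at hx
    simp only [SetLike.mem_coe] at hx ⊢
    rw [Submodule.mem_bot] at hx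
    rw [hx]
    exact U.zero_mem
  -- ## Step 1: the key lemma from the OP-condition
  have hKL : ∀ m ∈ maximalIdeal A, m ∉ (maximalIdeal A) ^ 2 → m ^ 3 = 0 → m ^ 2 = 0 := by
    intro m hm hm2 hm3
    obtain ⟨c, u, hu, k, hk1, huk, hmcu⟩ := hOP m hm hm3
    have hum : u ∈ maximalIdeal A := hUm hu
    rcases Nat.lt_or_ge k 2 with hk | hk
    · -- k = 1
      have hk1' : k = 1 := by omega
      subst hk1'
      rw [hmcu]
      have : u ^ (1 + 1) = 0 := huk
      calc ((c : A) * u ^ 1) ^ 2 = (c : A) ^ 2 * u ^ (1 + 1) := by ring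
        _ = 0 := by rw [this, mul_zero]
    · -- k ≥ 2 is impossible
      exfalso
      apply hm2
      rw [hmcu]
      apply Ideal.mul_mem_left
      have : u ^ k ∈ maximalIdeal A ^ k := Ideal.pow_mem_pow hum k
      exact Ideal.pow_le_pow_right hk this
  -- ## Step 2: there is `t ∈ 𝔪` with `t ^ 3 ≠ 0`
  obtain ⟨t, htm, ht3⟩ : ∃ t ∈ maximalIdeal A, t ^ 3 ≠ 0 := by
    by_contra hno
    push_neg at hno
    have htriple : ∀ x ∈ maximalIdeal A, ∀ y ∈ maximalIdeal A, ∀ z ∈ maximalIdeal A,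
        x * y * z = 0 := by
      intro x hx y hy z hz
      have h6 : (6 : A) * (x * y * z) = 0 := by
        have e1 := hno (x + y + z) (add_mem (add_mem hx hy) hz)
        have e2 := hno (x + y) (add_mem hx hy)
        have e3 := hno (x + z) (add_mem hx hz)
        have e4 := hno (y + z) (add_mem hy hz)
        have e5 := hno x hx
        have e6 := hno y hy
        have e7 := hno z hz
        linear_combination e1 - e2 - e3 - e4 + e5 + e6 + e7
      have h6' : (6 : ℂ) • (x * y * z) = 0 := by
        rw [Algebra.smul_def, map_ofNat]
        exact h6
      rcases smul_eq_zero.mp h6' with h | h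
      · norm_num at h
      · exact h
    apply hM3ne
    rw [eq_bot_iff]
    intro w hw
    rw [show (3:ℕ) = 2 + 1 by norm_num, pow_succ, hsq_ideal] at hw
    rw [Submodule.mem_bot]
    refine Submodule.mul_induction_on hw ?_ ?_
    · intro a ha z hz
      refine Submodule.mul_induction_on ha ?_ ?_
      · intro x hx y hy
        exact htriple x hx y hy z hz
      · intro p q hp hq
        rw [add_mul, hp, hq, add_zero]
    · intro p q hp hq
      rw [hp, hq, add_zero]
  -- ## Step 3: socle is spanned by t^3
  have ht4 : t ^ 4 = 0 := by
    have h := hprod4 t htm t htm t htm t htm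
    linear_combination h
  have htsoc : t ^ 3 ∈ socle A := by
    intro x hx
    have h := hprod4 t htm t htm t htm x hx
    linear_combination h
  have hsoc_fr : Module.finrank ℂ ((socle A).restrictScalars ℂ) = 1 := hsoc
  have hsoc_eq : (socle A).restrictScalars ℂ = Submodule.span ℂ {t ^ 3} := by
    have hle : Submodule.span ℂ {t ^ 3} ≤ (socle A).restrictScalars ℂ := by
      rw [Submodule.span_le, Set.singleton_subset_iff]
      exact htsoc
    refine (Submodule.eq_of_le_of_finrank_le hle ?_).symm
    rw [finrank_span_singleton ht3, hsoc_fr]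
  have hsocC : ∀ a : A, (∀ x ∈ maximalIdeal A, a * x = 0) →
      ∃ μ : ℂ, a = algebraMap ℂ A μ * t ^ 3 := by
    intro a ha
    have hmem : a ∈ (socle A).restrictScalars ℂ := ha
    rw [hsoc_eq] at hmem
    obtain ⟨μ, hμ⟩ := Submodule.mem_span_singleton.mp hmem
    exact ⟨μ, by rw [← hμ, Algebra.smul_def]⟩
  have hcubeC : ∀ a ∈ (maximalIdeal A) ^ 3, ∃ μ : ℂ, a = algebraMap ℂ A μ * t ^ 3 := by
    intro a ha
    apply hsocC
    intro x hx
    apply h4z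
    rw [show (4:ℕ) = 3 + 1 by norm_num, pow_succ]
    exact Ideal.mul_mem_mul ha hx
  -- ## Step 4: the root trick
  have hL1 : ∀ y ∈ maximalIdeal A, ∃ l : ℂ, (y - algebraMap ℂ A l * t) ^ 3 = 0 := by
    intro y hy
    obtain ⟨a, hA⟩ := hcubeC (y * y * y) (hmem3 y hy y hy y hy)
    obtain ⟨b, hB⟩ := hcubeC (y * y * t) (hmem3 y hy y hy t htm)
    obtain ⟨c, hC⟩ := hcubeC (y * t * t) (hmem3 y hy t htm t htm)
    obtain ⟨l, hl⟩ := cubic_root a b c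
    refine ⟨l, ?_⟩
    have hmap : algebraMap ℂ A (a - 3 * l * b + 3 * l ^ 2 * c - l ^ 3) = 0 := by
      rw [hl, map_zero]
    simp only [map_sub, map_add, map_mul, map_pow, map_ofNat] at hmap
    linear_combination hA - 3 * (algebraMap ℂ A l) * hB + 3 * (algebraMap ℂ A l) ^ 2 * hC
      + t ^ 3 * hmap
  -- division by 2
  have htwo : ∀ z : A, (2 : A) * z = 0 → z = 0 := by
    intro z h
    have h' : (2 : ℂ) • z = 0 := by rw [Algebra.smul_def, map_ofNat]; exact h
    rcases smul_eq_zero.mp h' with h'' | h''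
    · norm_num at h''
    · exact h''
  -- ## Step 5: square-zero elements annihilate all squares
  have hL3 : ∀ m ∈ maximalIdeal A, m ^ 2 = 0 → ∀ w ∈ maximalIdeal A, w ^ 2 * m = 0 := by
    intro m hm hmsq w hw
    by_cases hw2 : w ∈ (maximalIdeal A) ^ 2
    · have hmem : w * w ∈ (maximalIdeal A) ^ 4 := by
        rw [show (4:ℕ) = 2 + 2 by norm_num, pow_add]
        exact Ideal.mul_mem_mul hw2 hw2
      have hz := h4z hmem
      linear_combination m * hz
    by_cases hw3 : w ^ 3 = 0
    · have hz := hKL w hw hw2 hw3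
      linear_combination m * hz
    obtain ⟨γ₁, hγ₁⟩ := hcubeC (w * w * m) (hmem3 w hw w hw m hm)
    by_cases hγ0 : γ₁ = 0
    · rw [hγ0, map_zero, zero_mul] at hγ₁
      linear_combination hγ₁
    obtain ⟨γ₂, hγ₂⟩ := hcubeC (w * w * w) (hmem3 w hw w hw w hw)
    set μ : ℂ := -γ₂ / (3 * γ₁) with hμdef
    have hμγ : γ₂ + 3 * μ * γ₁ = 0 := by rw [hμdef]; field_simp; ring
    have hscalar : algebraMap ℂ A γ₂ + 3 * algebraMap ℂ A μ * algebraMap ℂ A γ₁ = 0 := by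
      have := congrArg (algebraMap ℂ A) hμγ
      simpa only [map_add, map_mul, map_ofNat, map_zero] using this
    have hvm : w + algebraMap ℂ A μ * m ∈ maximalIdeal A :=
      add_mem hw (Ideal.mul_mem_left _ _ hm)
    have hv3 : (w + algebraMap ℂ A μ * m) ^ 3 = 0 := by
      linear_combination hγ₂ + 3 * algebraMap ℂ A μ * hγ₁
        + (3 * (algebraMap ℂ A μ) ^ 2 * w + (algebraMap ℂ A μ) ^ 3 * m) * hmsq
        + t ^ 3 * hscalar
    have hvnot2 : w + algebraMap ℂ A μ * m ∉ (maximalIdeal A) ^ 2 := by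
      intro hv2
      apply hw3
      have hvsq : (w + algebraMap ℂ A μ * m) * (w + algebraMap ℂ A μ * m) = 0 := by
        apply h4z
        rw [show (4:ℕ) = 2 + 2 by norm_num, pow_add]
        exact Ideal.mul_mem_mul hv2 hv2
      linear_combination hv3 - 3 * algebraMap ℂ A μ * m * hvsq
        + (3 * (algebraMap ℂ A μ) ^ 2 * w + 2 * (algebraMap ℂ A μ) ^ 3 * m) * hmsq
    have hvsq0 := hKL _ hvm hvnot2 hv3
    linear_combination m * hvsq0 - (2 * algebraMap ℂ A μ * w + (algebraMap ℂ A μ) ^ 2 * m) * hmsq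
  -- polarization
  have hL4 : ∀ m ∈ maximalIdeal A, m ^ 2 = 0 → ∀ x ∈ maximalIdeal A, ∀ y ∈ maximalIdeal A,
      x * y * m = 0 := by
    intro m hm hmsq x hx y hy
    have e1 := hL3 m hm hmsq (x + y) (add_mem hx hy)
    have e2 := hL3 m hm hmsq x hx
    have e3 := hL3 m hm hmsq y hy
    apply htwo
    linear_combination e1 - e2 - e3
  -- annihilating 𝔪²
  have hann2 : ∀ m : A, (∀ x ∈ maximalIdeal A, ∀ y ∈ maximalIdeal A, x * y * m = 0) →
      ∀ q ∈ (maximalIdeal A) ^ 2, q * m = 0 := by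
    intro m hm q hq
    rw [hsq_ideal] at hq
    refine Submodule.mul_induction_on hq ?_ ?_
    · intro x hx y hy
      exact hm x hx y hy
    · intro p q hp hq
      rw [add_mul, hp, hq, add_zero]
  -- any two square-zero elements of 𝔪 multiply to zero
  have hgood : ∀ n1 ∈ maximalIdeal A, ∀ n2 ∈ maximalIdeal A, n1 ^ 2 = 0 → n2 ^ 2 = 0 →
      n1 * n2 = 0 := by
    intro n1 h1 n2 h2 hsq1 hsq2
    have hvv : (n1 + n2) * (n1 + n2) = 0 := by
      by_cases hv2 : n1 + n2 ∈ (maximalIdeal A) ^ 2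
      · apply h4z
        rw [show (4:ℕ) = 2 + 2 by norm_num, pow_add]
        exact Ideal.mul_mem_mul hv2 hv2
      · have hv3 : (n1 + n2) ^ 3 = 0 := by
          linear_combination (n1 + 3 * n2) * hsq1 + (3 * n1 + n2) * hsq2
        have := hKL (n1 + n2) (add_mem h1 h2) hv2 hv3
        linear_combination this
    apply htwo
    linear_combination hvv - hsq1 - hsq2
  -- adjusted square-zero elements
  have hadj : ∀ m' ∈ maximalIdeal A, m' ^ 2 = 0 →
      ∃ n ∈ maximalIdeal A, n ^ 2 = 0 ∧ t * n = 0 ∧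
        (∀ x ∈ maximalIdeal A, ∀ y ∈ maximalIdeal A, x * y * n = 0) ∧
        m' - n ∈ (maximalIdeal A) ^ 2 := by
    intro m' hm' hmsq'
    have h1' := hL4 m' hm' hmsq'
    obtain ⟨δ, hδ⟩ : ∃ δ, t * m' = algebraMap ℂ A δ * t ^ 3 := by
      apply hsocC
      intro x hx
      linear_combination h1' t htm x hx
    refine ⟨m' - algebraMap ℂ A δ * t ^ 2, ?_, ?_, ?_, ?_, ?_⟩
    · exact sub_mem hm' (Ideal.mul_mem_left _ _ (by rw [pow_two]; exact (maximalIdeal A).mul_mem_left t htm))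
    · linear_combination hmsq' - 2 * algebraMap ℂ A δ * t * hδ - (algebraMap ℂ A δ) ^ 2 * ht4
    · linear_combination hδ
    · intro x hx y hy
      linear_combination h1' x hx y hy - algebraMap ℂ A δ * hprod4 x hx y hy t htm t htm
    · have : m' - (m' - algebraMap ℂ A δ * t ^ 2) = algebraMap ℂ A δ * (t * t) := by ring
      rw [this]
      exact Ideal.mul_mem_left _ _ (hmem2 t htm t htm)
  -- main annihilation
  have hfin : ∀ n ∈ maximalIdeal A, n ^ 2 = 0 → t * n = 0 →
      (∀ x ∈ maximalIdeal A, ∀ y ∈ maximalIdeal A, x * y * n = 0) →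
      ∀ x ∈ maximalIdeal A, n * x = 0 := by
    intro n hn hnsq htn hannn x hx
    obtain ⟨l, hl⟩ := hL1 x hx
    by_cases hmem : x - algebraMap ℂ A l * t ∈ (maximalIdeal A) ^ 2
    · have hq := hann2 n hannn _ hmem
      linear_combination hq + algebraMap ℂ A l * htn
    · have hxl : x - algebraMap ℂ A l * t ∈ maximalIdeal A :=
        sub_mem hx (Ideal.mul_mem_left _ _ htm)
      have hsq' := hKL _ hxl hmem hl
      obtain ⟨n2, hn2, hn2sq, htn2, hann2', hdiff⟩ := hadj _ hxl hsq'
      have hnn2 := hgood n hn n2 hn2 hnsq hn2sq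
      have hqn := hann2 n hannn _ hdiff
      linear_combination hqn + hnn2 + algebraMap ℂ A l * htn
  -- no bad elements
  have hnobad : ∀ m ∈ maximalIdeal A, m ∉ (maximalIdeal A) ^ 2 → m ^ 2 = 0 → False := by
    intro m hm hm2 hmsq
    obtain ⟨n, hn, hnsq, htn, hannn, hdiff⟩ := hadj m hm hmsq
    obtain ⟨lam, hlam⟩ := hsocC n (hfin n hn hnsq htn hannn)
    apply hm2
    have : m = (m - n) + algebraMap ℂ A lam * t ^ 3 := by rw [← hlam]; ring
    rw [this]
    apply add_mem hdiff
    apply Ideal.mul_mem_left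
    exact Ideal.pow_le_pow_right (by norm_num) (Ideal.pow_mem_pow htm 3)
  -- ## Step 6: 𝔪 = ℂt + 𝔪²
  have hL6 : ∀ y ∈ maximalIdeal A, ∃ l : ℂ, y - algebraMap ℂ A l * t ∈ (maximalIdeal A) ^ 2 := by
    intro y hy
    obtain ⟨l, hl⟩ := hL1 y hy
    refine ⟨l, ?_⟩
    by_contra hmem
    have hym : y - algebraMap ℂ A l * t ∈ maximalIdeal A :=
      sub_mem hy (Ideal.mul_mem_left _ _ htm)
    exact hnobad _ hym hmem (hKL _ hym hmem hl)
  have hL6' : ∀ q ∈ (maximalIdeal A) ^ 2, ∃ l : ℂ,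
      q - algebraMap ℂ A l * t ^ 2 ∈ (maximalIdeal A) ^ 3 := by
    intro q hq
    rw [hsq_ideal] at hq
    refine Submodule.mul_induction_on hq ?_ ?_
    · intro x hx y hy
      obtain ⟨lx, hlx⟩ := hL6 x hx
      obtain ⟨ly, hly⟩ := hL6 y hy
      refine ⟨lx * ly, ?_⟩
      have hkey : x * y - algebraMap ℂ A (lx * ly) * t ^ 2 =
          algebraMap ℂ A lx * (t * (y - algebraMap ℂ A ly * t))
          + (x - algebraMap ℂ A lx * t) * y := by
        rw [map_mul]; ring
      rw [hkey]
      apply add_mem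
      · apply Ideal.mul_mem_left
        rw [show (3:ℕ) = 1 + 2 by norm_num, pow_add, pow_one]
        exact Ideal.mul_mem_mul htm hly
      · rw [show (3:ℕ) = 2 + 1 by norm_num, pow_succ]
        exact Ideal.mul_mem_mul hlx hy
    · intro p q hp hq
      obtain ⟨l1, h1⟩ := hp
      obtain ⟨l2, h2⟩ := hq
      refine ⟨l1 + l2, ?_⟩
      have : p + q - algebraMap ℂ A (l1 + l2) * t ^ 2 =
          (p - algebraMap ℂ A l1 * t ^ 2) + (q - algebraMap ℂ A l2 * t ^ 2) := by
        rw [map_add]; ring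
      rw [this]
      exact add_mem h1 h2
  have hMspan : ∀ y ∈ maximalIdeal A, ∃ l1 l2 l3 : ℂ,
      y = algebraMap ℂ A l1 * t + algebraMap ℂ A l2 * t ^ 2 + algebraMap ℂ A l3 * t ^ 3 := by
    intro y hy
    obtain ⟨l1, h1⟩ := hL6 y hy
    obtain ⟨l2, h2⟩ := hL6' _ h1
    obtain ⟨l3, h3⟩ := hcubeC _ h2
    exact ⟨l1, l2, l3, by linear_combination h3⟩
  -- ## Step 7: every element of A is ℂ·1 + 𝔪
  have hres : ∀ a : A, ∃ l : ℂ, a - algebraMap ℂ A l ∈ maximalIdeal A := by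
    have hsurj : Function.Surjective (algebraMap ℂ (ResidueField A)) := by
      let f : A →ₗ[ℂ] ResidueField A :=
        { toFun := residue A
          map_add' := by intro a b; exact map_add _ a b
          map_smul' := by
            intro c a
            simp only [RingHom.id_apply]
            rw [Algebra.smul_def, map_mul, Algebra.smul_def]
            congr 1 }
      have : Module.Finite ℂ (ResidueField A) := Module.Finite.of_surjective f residue_surjective
      have : Algebra.IsIntegral ℂ (ResidueField A) := Algebra.IsIntegral.of_finite _ _
      exact IsAlgClosed.algebraMap_bijective_of_isIntegral.2
    intro a
    obtain ⟨l, hl⟩ := hsurj (residue A a)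
    refine ⟨l, ?_⟩
    have : residue A (a - algebraMap ℂ A l) = 0 := by
      rw [map_sub, ← hl]
      have : residue A (algebraMap ℂ A l) = algebraMap ℂ (ResidueField A) l := rfl
      rw [this, hl, sub_self]
    exact (Ideal.Quotient.eq_zero_iff_mem).mp this
  have hAspan : ∀ a : A, ∃ l0 l1 l2 l3 : ℂ,
      a = algebraMap ℂ A l0 + algebraMap ℂ A l1 * t + algebraMap ℂ A l2 * t ^ 2
        + algebraMap ℂ A l3 * t ^ 3 := by
    intro a
    obtain ⟨l0, h0⟩ := hres a
    obtain ⟨l1, l2, l3, h⟩ := hMspan _ h0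
    exact ⟨l0, l1, l2, l3, by linear_combination h⟩
  -- higher powers of t vanish
  have h5 : t ^ 5 = 0 := by linear_combination t * ht4
  have h6 : t ^ 6 = 0 := by linear_combination t ^ 2 * ht4
  have ht2m : t ^ 2 ∈ maximalIdeal A := by
    rw [pow_two]; exact (maximalIdeal A).mul_mem_left t htm
  have ht3m : t ^ 3 ∈ maximalIdeal A := by
    rw [pow_succ]; exact (maximalIdeal A).mul_mem_right t ht2m
  -- ## Step 8: linear independence and dimensions
  have li3 : LinearIndependent ℂ ![t, t ^ 2, t ^ 3] := by
    apply Fintype.linearIndependent_iff.mpr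
    intro g hg
    simp only [Fin.sum_univ_three, Matrix.cons_val_zero, Matrix.cons_val_one, Matrix.head_cons,
      Matrix.cons_val_two, Matrix.tail_cons] at hg
    have h : algebraMap ℂ A 0 + algebraMap ℂ A (g 0) * t + algebraMap ℂ A (g 1) * t ^ 2
        + algebraMap ℂ A (g 2) * t ^ 3 = 0 := by
      rw [map_zero, zero_add, ← Algebra.smul_def, ← Algebra.smul_def, ← Algebra.smul_def]
      exact hg
    obtain ⟨-, h1, h2, h3⟩ := coeffs4 ht3 ht4 h
    intro i
    fin_cases i <;> assumption
  have li2 : LinearIndependent ℂ ![t ^ 2, t ^ 3] := by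
    apply Fintype.linearIndependent_iff.mpr
    intro g hg
    simp only [Fin.sum_univ_two, Matrix.cons_val_zero, Matrix.cons_val_one,
      Matrix.head_cons] at hg
    have h : algebraMap ℂ A 0 + algebraMap ℂ A 0 * t + algebraMap ℂ A (g 0) * t ^ 2
        + algebraMap ℂ A (g 1) * t ^ 3 = 0 := by
      simp only [map_zero, zero_mul, zero_add, ← Algebra.smul_def]
      exact hg
    obtain ⟨-, -, h2, h3⟩ := coeffs4 ht3 ht4 h
    intro i
    fin_cases i <;> assumption
  have hM_eq : (maximalIdeal A).restrictScalars ℂ = Submodule.span ℂ {t, t ^ 2, t ^ 3} := by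
    apply le_antisymm
    · intro y hy
      obtain ⟨l1, l2, l3, hl⟩ := hMspan y hy
      rw [hl, ← Algebra.smul_def, ← Algebra.smul_def, ← Algebra.smul_def]
      refine add_mem (add_mem ?_ ?_) ?_ <;>
        exact Submodule.smul_mem _ _ (Submodule.subset_span (by simp))
    · rw [Submodule.span_le]
      intro x hx
      simp only [Set.mem_insert_iff, Set.mem_singleton_iff] at hx
      rcases hx with rfl | rfl | rfl
      · exact htm
      · exact ht2m
      · exact ht3m
  have hMfr : Module.finrank ℂ ((maximalIdeal A).restrictScalars ℂ) = 3 := by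
    rw [hM_eq, ← range_triple t (t ^ 2) (t ^ 3), finrank_span_eq_card li3]
    simp
  have hU2 : Module.finrank ℂ U = 2 := by
    have h := Submodule.finrank_sup_add_finrank_inf_eq U ((socle A).restrictScalars ℂ)
    rw [hsup, hinf, hMfr, hsoc_fr, finrank_bot] at h
    omega
  have hWfr : Module.finrank ℂ (Submodule.span ℂ ({t ^ 2, t ^ 3} : Set A)) = 2 := by
    rw [← range_pair (t ^ 2) (t ^ 3), finrank_span_eq_card li2]
    simp
  have hW_le : Submodule.span ℂ ({t ^ 2, t ^ 3} : Set A) ≤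
      (maximalIdeal A).restrictScalars ℂ := by
    rw [Submodule.span_le]
    intro x hx
    simp only [Set.mem_insert_iff, Set.mem_singleton_iff] at hx
    rcases hx with rfl | rfl
    · exact ht2m
    · exact ht3m
  -- there is a nonzero element of U ∩ span{t², t³}
  obtain ⟨v, hvUW, hv0⟩ : ∃ v ∈ U ⊓ Submodule.span ℂ ({t ^ 2, t ^ 3} : Set A), v ≠ 0 := by
    have h := Submodule.finrank_sup_add_finrank_inf_eq U
      (Submodule.span ℂ ({t ^ 2, t ^ 3} : Set A))
    rw [hU2, hWfr] at h
    have hle : U ⊔ Submodule.span ℂ ({t ^ 2, t ^ 3} : Set A) ≤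
        (maximalIdeal A).restrictScalars ℂ := sup_le hUm hW_le
    have h3 : Module.finrank ℂ (U ⊔ Submodule.span ℂ ({t ^ 2, t ^ 3} : Set A) :
        Submodule ℂ A) ≤ 3 := by
      have h3' := Submodule.finrank_mono hle
      rw [hMfr] at h3'
      exact h3'
    have hpos : 0 < Module.finrank ℂ
        (U ⊓ Submodule.span ℂ ({t ^ 2, t ^ 3} : Set A) : Submodule ℂ A) := by omega
    by_contra hcon
    push_neg at hcon
    have : U ⊓ Submodule.span ℂ ({t ^ 2, t ^ 3} : Set A) = ⊥ := by
      rw [eq_bot_iff]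
      intro x hx
      rw [Submodule.mem_bot]
      by_contra hx0
      exact hx0 (hcon x hx)
    rw [this, finrank_bot] at hpos
    omega
  obtain ⟨hvU, hvW⟩ := hvUW
  obtain ⟨β, γ, hvβγ⟩ := Submodule.mem_span_pair.mp hvW
  have hvA : v = algebraMap ℂ A β * t ^ 2 + algebraMap ℂ A γ * t ^ 3 := by
    rw [← hvβγ, Algebra.smul_def, Algebra.smul_def]
  have hβ : β ≠ 0 := by
    intro hβ0
    apply hv0
    have hvsoc : v ∈ (socle A).restrictScalars ℂ := by
      rw [hsoc_eq]
      apply Submodule.mem_span_singleton.mpr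
      exact ⟨γ, by rw [Algebra.smul_def, hvA, hβ0, map_zero, zero_mul, zero_add]⟩
    have : v ∈ U ⊓ (socle A).restrictScalars ℂ := ⟨hvU, hvsoc⟩
    rw [hinf] at this
    exact this
  -- there is an element of U not in span{t², t³}
  obtain ⟨u₀, hu₀U, hu₀W⟩ : ∃ u₀ ∈ U, u₀ ∉ Submodule.span ℂ ({t ^ 2, t ^ 3} : Set A) := by
    by_contra hcon
    push_neg at hcon
    have hUle : U ≤ Submodule.span ℂ ({t ^ 2, t ^ 3} : Set A) := hcon
    have htW : t ∈ Submodule.span ℂ ({t ^ 2, t ^ 3} : Set A) := by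
      have htM : t ∈ (maximalIdeal A).restrictScalars ℂ := htm
      rw [← hsup] at htM
      refine (sup_le hUle ?_) htM
      rw [hsoc_eq]
      apply Submodule.span_le.mpr
      rw [Set.singleton_subset_iff]
      exact Submodule.subset_span (by simp)
    obtain ⟨p, q, hpq⟩ := Submodule.mem_span_pair.mp htW
    rw [Algebra.smul_def, Algebra.smul_def] at hpq
    apply ht3
    have hmul := congrArg (· * t ^ 2) hpq
    linear_combination -hmul + algebraMap ℂ A p * ht4 + algebraMap ℂ A q * h5
  obtain ⟨a1, a2, a3, hu₀A⟩ := hMspan u₀ (hUm hu₀U)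
  have ha1 : a1 ≠ 0 := by
    intro ha0
    apply hu₀W
    rw [hu₀A, ha0, map_zero, zero_mul, zero_add, ← Algebra.smul_def, ← Algebra.smul_def]
    exact add_mem (Submodule.smul_mem _ _ (Submodule.subset_span (by simp)))
      (Submodule.smul_mem _ _ (Submodule.subset_span (by simp)))
  -- ## Step 9: construction of t'
  obtain ⟨ρ, hρ⟩ : ∃ ρ : ℂ, ρ = (β⁻¹ * γ) / 2 - a1⁻¹ * a2 := ⟨_, rfl⟩
  obtain ⟨Bc, hBc⟩ : ∃ Bc : ℂ, Bc = (β⁻¹ * γ) / 2 := ⟨_, rfl⟩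
  obtain ⟨Cc, hCc⟩ : ∃ Cc : ℂ, Cc = a1⁻¹ * a3 + ρ * (β⁻¹ * γ) := ⟨_, rfl⟩
  have c1 : a1⁻¹ * a1 = 1 := inv_mul_cancel₀ ha1
  have hββ : β⁻¹ * β = 1 := inv_mul_cancel₀ hβ
  have c2 : a1⁻¹ * a2 + (ρ * β⁻¹) * β = Bc := by
    rw [hρ, hBc]
    linear_combination (β⁻¹ * γ / 2 - a1⁻¹ * a2) * hββ
  have c3 : a1⁻¹ * a3 + (ρ * β⁻¹) * γ = Cc := by
    rw [hCc]; ring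
  have c4 : 2 * Bc = β⁻¹ * γ := by rw [hBc]; ring
  have mc1 : algebraMap ℂ A a1⁻¹ * algebraMap ℂ A a1 = 1 := by
    rw [← map_mul, c1, map_one]
  have mc2 : algebraMap ℂ A a1⁻¹ * algebraMap ℂ A a2
      + algebraMap ℂ A (ρ * β⁻¹) * algebraMap ℂ A β = algebraMap ℂ A Bc := by
    rw [← map_mul, ← map_mul, ← map_add, c2]
  have mc3 : algebraMap ℂ A a1⁻¹ * algebraMap ℂ A a3
      + algebraMap ℂ A (ρ * β⁻¹) * algebraMap ℂ A γ = algebraMap ℂ A Cc := by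
    rw [← map_mul, ← map_mul, ← map_add, c3]
  have mc4 : 2 * algebraMap ℂ A Bc = algebraMap ℂ A (β⁻¹ * γ) := by
    rw [← map_ofNat (algebraMap ℂ A) 2, ← map_mul, c4]
  have mcβ : algebraMap ℂ A β⁻¹ * algebraMap ℂ A β = 1 := by
    rw [← map_mul, inv_mul_cancel₀ hβ, map_one]
  have mcγ : algebraMap ℂ A β⁻¹ * algebraMap ℂ A γ = algebraMap ℂ A (β⁻¹ * γ) :=
    (map_mul _ _ _).symm
  obtain ⟨t', ht'def⟩ : ∃ t' : A, t' = a1⁻¹ • u₀ + (ρ * β⁻¹) • v := ⟨_, rfl⟩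
  have ht'A : t' = t + algebraMap ℂ A Bc * t ^ 2 + algebraMap ℂ A Cc * t ^ 3 := by
    rw [ht'def, Algebra.smul_def, Algebra.smul_def, hu₀A, hvA]
    linear_combination t * mc1 + t ^ 2 * mc2 + t ^ 3 * mc3
  have ht'U : t' ∈ U := by
    rw [ht'def]
    exact add_mem (U.smul_mem _ hu₀U) (U.smul_mem _ hvU)
  have ht'm : t' ∈ maximalIdeal A := by
    rw [ht'A]
    exact add_mem (add_mem htm (Ideal.mul_mem_left _ _ ht2m)) (Ideal.mul_mem_left _ _ ht3m)
  have h7 : t ^ 7 = 0 := by linear_combination t ^ 3 * ht4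
  have h8 : t ^ 8 = 0 := by linear_combination t ^ 4 * ht4
  have h9 : t ^ 9 = 0 := by linear_combination t ^ 5 * ht4
  have ht'3 : t' ^ 3 = t ^ 3 := by
    rw [ht'A]
    linear_combination (3 * algebraMap ℂ A Bc) * ht4
      + (3 * algebraMap ℂ A Cc + 3 * (algebraMap ℂ A Bc) ^ 2) * h5
      + (6 * algebraMap ℂ A Bc * algebraMap ℂ A Cc + (algebraMap ℂ A Bc) ^ 3) * h6
      + (3 * (algebraMap ℂ A Cc) ^ 2 + 3 * (algebraMap ℂ A Bc) ^ 2 * algebraMap ℂ A Cc) * h7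
      + (3 * algebraMap ℂ A Bc * (algebraMap ℂ A Cc) ^ 2) * h8
      + (algebraMap ℂ A Cc) ^ 3 * h9
  have ht'4 : t' ^ 4 = 0 := by
    have h : t' ^ 4 = t' ^ 3 * t' := by ring
    rw [h, ht'3, ht'A]
    linear_combination ht4 + algebraMap ℂ A Bc * h5 + algebraMap ℂ A Cc * h6
  have ht'3ne : t' ^ 3 ≠ 0 := by rw [ht'3]; exact ht3
  have ht'sqA : t' ^ 2 = t ^ 2 + algebraMap ℂ A (β⁻¹ * γ) * t ^ 3 := by
    rw [ht'A]
    linear_combination ((algebraMap ℂ A Bc) ^ 2 + 2 * algebraMap ℂ A Cc) * ht4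
      + (2 * algebraMap ℂ A Bc * algebraMap ℂ A Cc) * h5 + (algebraMap ℂ A Cc) ^ 2 * h6
      + t ^ 3 * mc4
  have hv1A : β⁻¹ • v = t ^ 2 + algebraMap ℂ A (β⁻¹ * γ) * t ^ 3 := by
    rw [Algebra.smul_def, hvA]
    linear_combination t ^ 2 * mcβ + t ^ 3 * mcγ
  have ht'sqU : t' ^ 2 ∈ U := by
    rw [ht'sqA, ← hv1A]
    exact U.smul_mem _ hvU
  -- U is spanned by t' and t'^2
  have li2' : LinearIndependent ℂ ![t', t' ^ 2] := by
    apply Fintype.linearIndependent_iff.mpr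
    intro g hg
    simp only [Fin.sum_univ_two, Matrix.cons_val_zero, Matrix.cons_val_one,
      Matrix.head_cons] at hg
    have h : algebraMap ℂ A 0 + algebraMap ℂ A (g 0) * t' + algebraMap ℂ A (g 1) * t' ^ 2
        + algebraMap ℂ A 0 * t' ^ 3 = 0 := by
      simp only [map_zero, zero_mul, zero_add, add_zero, ← Algebra.smul_def]
      exact hg
    obtain ⟨-, h1, h2, -⟩ := coeffs4 ht'3ne ht'4 h
    intro i
    fin_cases i <;> assumption
  have hUspan : U = Submodule.span ℂ ({t', t' ^ 2} : Set A) := by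
    have hle' : Submodule.span ℂ ({t', t' ^ 2} : Set A) ≤ U := by
      rw [Submodule.span_le]
      intro x hx
      simp only [Set.mem_insert_iff, Set.mem_singleton_iff] at hx
      rcases hx with rfl | rfl
      · exact ht'U
      · exact ht'sqU
    refine (Submodule.eq_of_le_of_finrank_le hle' ?_).symm
    rw [hU2, ← range_pair t' (t' ^ 2), finrank_span_eq_card li2']
    simp
  -- every element of A is a polynomial in t'
  have hAspan' : ∀ a : A, ∃ l0 l1 l2 l3 : ℂ,
      a = algebraMap ℂ A l0 + algebraMap ℂ A l1 * t' + algebraMap ℂ A l2 * t' ^ 2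
        + algebraMap ℂ A l3 * t' ^ 3 := by
    intro a
    obtain ⟨l0, l1, l2, l3, ha⟩ := hAspan a
    have s3 : t ^ 3 = t' ^ 3 := ht'3.symm
    have s2 : t ^ 2 = t' ^ 2 - algebraMap ℂ A (β⁻¹ * γ) * t' ^ 3 := by
      rw [ht'sqA, ht'3]; ring
    have s1 : t = t' - algebraMap ℂ A Bc * t ^ 2 - algebraMap ℂ A Cc * t ^ 3 := by
      rw [ht'A]; ring
    refine ⟨l0, l1, l2 - l1 * Bc,
      l3 - l1 * Cc - l2 * (β⁻¹ * γ) + l1 * Bc * (β⁻¹ * γ), ?_⟩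
    simp only [map_sub, map_add, map_mul]
    linear_combination ha + algebraMap ℂ A l1 * s1
      + (algebraMap ℂ A l2 - algebraMap ℂ A l1 * algebraMap ℂ A Bc) * s2
      + (algebraMap ℂ A l3 - algebraMap ℂ A l1 * algebraMap ℂ A Cc) * s3
      + (algebraMap ℂ A l2 - algebraMap ℂ A l1 * algebraMap ℂ A Bc) * t' ^ 3 * mcγ
  -- ## Step 10: the isomorphism
  have haev4 : (Polynomial.aeval t') ((X : ℂ[X]) ^ 4) = 0 := by
    rw [map_pow, Polynomial.aeval_X]
    exact ht'4
  have hker : ∀ p ∈ Ideal.span {(X : ℂ[X]) ^ 4}, (Polynomial.aeval t') p = 0 := by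
    intro p hp
    rw [Ideal.mem_span_singleton] at hp
    obtain ⟨q, rfl⟩ := hp
    rw [map_mul, haev4, zero_mul]
  obtain ⟨ψ, hψmk⟩ : ∃ ψ : (ℂ[X] ⧸ Ideal.span {(X : ℂ[X]) ^ 4}) →ₐ[ℂ] A,
      ∀ p : ℂ[X], ψ (Ideal.Quotient.mk (Ideal.span {(X : ℂ[X]) ^ 4}) p)
        = (Polynomial.aeval t') p := by
    refine ⟨Ideal.Quotient.liftₐ _ (Polynomial.aeval t') hker, ?_⟩
    intro p
    rfl
  -- kernel computation
  have hdvd : ∀ r : ℂ[X], (Polynomial.aeval t') r = 0 → r ∈ Ideal.span {(X : ℂ[X]) ^ 4} := by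
    intro r hr
    have hmon : ((X : ℂ[X]) ^ 4).Monic := monic_X_pow 4
    have hdecomp := modByMonic_add_div r ((X : ℂ[X]) ^ 4)
    have hsev : (Polynomial.aeval t') (r %ₘ (X : ℂ[X]) ^ 4) = 0 := by
      have h' : (Polynomial.aeval t') (r %ₘ (X : ℂ[X]) ^ 4)
          + (Polynomial.aeval t') ((X : ℂ[X]) ^ 4 * (r /ₘ (X : ℂ[X]) ^ 4))
          = (Polynomial.aeval t') r := by
        rw [← map_add, hdecomp]
      rw [map_mul, haev4, zero_mul, add_zero, hr] at h'
      exact h'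
    have hs0 : r %ₘ (X : ℂ[X]) ^ 4 = 0 := by
      by_cases hz : r %ₘ (X : ℂ[X]) ^ 4 = 0
      · exact hz
      · exfalso
        have hdeg : (r %ₘ (X : ℂ[X]) ^ 4).natDegree < 4 := by
          rw [natDegree_lt_iff_degree_lt hz]
          have := degree_modByMonic_lt r hmon
          rwa [degree_X_pow] at this
        have hsum := Polynomial.aeval_eq_sum_range' hdeg t'
        rw [hsev] at hsum
        simp only [Finset.sum_range_succ, Finset.sum_range_zero, zero_add, pow_zero,
          pow_one, Algebra.smul_def, mul_one] at hsum
        have h0 : algebraMap ℂ A ((r %ₘ (X : ℂ[X]) ^ 4).coeff 0)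
            + algebraMap ℂ A ((r %ₘ (X : ℂ[X]) ^ 4).coeff 1) * t'
            + algebraMap ℂ A ((r %ₘ (X : ℂ[X]) ^ 4).coeff 2) * t' ^ 2
            + algebraMap ℂ A ((r %ₘ (X : ℂ[X]) ^ 4).coeff 3) * t' ^ 3 = 0 := by
          linear_combination -hsum
        obtain ⟨e0, e1, e2, e3⟩ := coeffs4 ht'3ne ht'4 h0
        apply hz
        apply Polynomial.ext
        intro n
        rw [Polynomial.coeff_zero]
        by_cases hn : n < 4
        · interval_cases n
          · exact e0
          · exact e1
          · exact e2
          · exact e3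
        · exact Polynomial.coeff_eq_zero_of_natDegree_lt (lt_of_lt_of_le hdeg (not_lt.mp hn))
    rw [Ideal.mem_span_singleton]
    refine ⟨r /ₘ (X : ℂ[X]) ^ 4, ?_⟩
    conv_lhs => rw [← hdecomp]
    rw [hs0, zero_add]
  have hinj : Function.Injective ψ := by
    intro x y hxy
    obtain ⟨p, rfl⟩ := Ideal.Quotient.mk_surjective x
    obtain ⟨q, rfl⟩ := Ideal.Quotient.mk_surjective y
    rw [Ideal.Quotient.eq]
    apply hdvd
    rw [map_sub, sub_eq_zero, ← hψmk, ← hψmk, hxy]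
  have hsurj : Function.Surjective ψ := by
    intro a
    obtain ⟨l0, l1, l2, l3, ha⟩ := hAspan' a
    refine ⟨Ideal.Quotient.mk _ (C l0 + C l1 * X + C l2 * X ^ 2 + C l3 * X ^ 3), ?_⟩
    rw [hψmk]
    simp only [map_add, map_mul, map_pow, Polynomial.aeval_C, Polynomial.aeval_X]
    exact ha.symm
  -- the equivalence
  refine ⟨(AlgEquiv.ofBijective ψ ⟨hinj, hsurj⟩).symm, ?_⟩
  have hE1 : (AlgEquiv.ofBijective ψ ⟨hinj, hsurj⟩).symm t'
      = Ideal.Quotient.mk (Ideal.span {(X : ℂ[X]) ^ 4}) X := by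
    have h1 : (AlgEquiv.ofBijective ψ ⟨hinj, hsurj⟩)
        (Ideal.Quotient.mk (Ideal.span {(X : ℂ[X]) ^ 4}) X) = t' := by
      show ψ _ = t'
      rw [hψmk, Polynomial.aeval_X]
    rw [← h1, AlgEquiv.symm_apply_apply]
  have hE2 : (AlgEquiv.ofBijective ψ ⟨hinj, hsurj⟩).symm (t' ^ 2)
      = Ideal.Quotient.mk (Ideal.span {(X : ℂ[X]) ^ 4}) (X ^ 2) := by
    have h1 : (AlgEquiv.ofBijective ψ ⟨hinj, hsurj⟩)
        (Ideal.Quotient.mk (Ideal.span {(X : ℂ[X]) ^ 4}) (X ^ 2)) = t' ^ 2 := by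
      show ψ _ = t' ^ 2
      rw [hψmk, map_pow, Polynomial.aeval_X]
    rw [← h1, AlgEquiv.symm_apply_apply]
  rw [hUspan, Submodule.map_span]
  congr 1
  rw [Set.image_insert_eq, Set.image_singleton]
  simp only [AlgEquiv.toLinearMap_apply]
  rw [hE1, hE2]
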